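/- Let A = C(X) with X compact Hausdorff, and p ∈ M_n(A) a projection of pointwise rank ≤ 1. The symmetric Hilbert C*-bimodule A^n p is full as a right module (i.e., the span of ⟨A^n p, A^n p⟩_R is dense in A) if and only if rank p(x) = 1 for all x ∈ X. In particular, the identity of K(A^n p) is τ(p), the characteristic function of {x ∈ X : rank p(x) = 1}. -/

import Mathlib

noncomputable section

open Matrix

private lemma trace_idem' {n : ℕ} (q : Matrix (Fin n) (Fin n) ℂ) (hq : q * q = q) :
    q.trace = (q.rank : ℂ) := by
  have hf : q.mulVecLin ∘ₗ q.mulVecLin = q.mulVecLin := by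
    rw [← Matrix.mulVecLin_mul, hq]
  obtain ⟨P, hP⟩ := (LinearMap.isProj_iff_isIdempotentElem _).mpr hf
  have hrange : LinearMap.range q.mulVecLin = P := by
    apply le_antisymm
    · rintro _ ⟨x, rfl⟩; exact hP.map_mem x
    · intro x hx; exact ⟨x, hP.map_id x hx⟩
  have ht := hP.trace
  rw [LinearMap.trace_eq_matrix_trace ℂ (Pi.basisFun ℂ (Fin n))] at ht
  have hm : LinearMap.toMatrix (Pi.basisFun ℂ (Fin n)) (Pi.basisFun ℂ (Fin n)) q.mulVecLin = q := by
    rw [LinearMap.toMatrix_eq_toMatrix', ← Matrix.toLin'_apply']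
    exact LinearMap.toMatrix'_toLin' q
  rw [hm] at ht
  rw [ht, Matrix.rank, hrange]

private lemma rank_zero_eq' {n : ℕ} (q : Matrix (Fin n) (Fin n) ℂ) (h : q.rank = 0) : q = 0 := by
  have : LinearMap.range q.mulVecLin = ⊥ := Submodule.finrank_eq_zero.mp h
  have h2 : q.mulVecLin = 0 := LinearMap.range_eq_bot.mp this
  ext i j
  have := congrFun (congrFun (congrArg DFunLike.coe h2) (Pi.single j 1)) i
  simpa [Matrix.mulVecLin, Matrix.mulVec_single] using this

theorem rowMod_full_iff_rank_eq_one
    {X : Type*} [TopologicalSpace X] [CompactSpace X] [T2Space X]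
    {n : ℕ} (p : Matrix (Fin n) (Fin n) C(X, ℂ))
    (hp : p * p = p) (hpsa : star p = p)
    (hrank : ∀ x : X, (p.map (fun f => f x)).rank ≤ 1) :
    ((closure (Submodule.span ℂ
        {a : C(X, ℂ) | ∃ m r : Fin n → C(X, ℂ), m ᵥ* p = m ∧ r ᵥ* p = r ∧
          a = ∑ i, star (m i) * r i} : Set C(X, ℂ)) = Set.univ) ↔
      ∀ x : X, (p.map (fun f => f x)).rank = 1) ∧
    (∀ m : Fin n → C(X, ℂ), m ᵥ* p = m → ∀ i, m i * (∑ j, p j j) = m i) ∧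
    (∀ x : X, (∑ j, p j j) x = if (p.map (fun f => f x)).rank = 1 then 1 else 0) := by
  set S : Set C(X, ℂ) :=
    {a : C(X, ℂ) | ∃ m r : Fin n → C(X, ℂ), m ᵥ* p = m ∧ r ᵥ* p = r ∧
      a = ∑ i, star (m i) * r i} with hS
  -- pointwise matrix
  have hqidem : ∀ x : X, (p.map (fun f => f x)) * (p.map (fun f => f x)) = p.map (fun f => f x) := by
    intro x
    ext i j
    have h := congrArg (fun f : C(X,ℂ) => f x) (congrFun (congrFun hp i) j)
    simp only [Matrix.mul_apply, ContinuousMap.coe_sum, Finset.sum_apply,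
      ContinuousMap.mul_apply] at h
    simp only [Matrix.mul_apply, Matrix.map_apply]
    exact h
  -- trace formula
  have htr : ∀ x : X, (∑ j, p j j) x = ((p.map (fun f => f x)).rank : ℂ) := by
    intro x
    have := trace_idem' (p.map (fun f => f x)) (hqidem x)
    rw [← this, Matrix.trace]
    simp [Matrix.diag, Matrix.map_apply]
  -- rank dichotomy
  have hdich : ∀ x : X, (p.map (fun f => f x)).rank = 1 ∨ p.map (fun f => f x) = 0 := by
    intro x
    rcases Nat.lt_or_ge (p.map (fun f => f x)).rank 1 with h | h
    · exact Or.inr (rank_zero_eq' _ (Nat.lt_one_iff.mp h))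
    · exact Or.inl (le_antisymm (hrank x) h)
  -- evaluation of vecMul
  have hvec : ∀ (m : Fin n → C(X,ℂ)), m ᵥ* p = m → ∀ i (x : X),
      m i x = ∑ j, m j x * (p j i) x := by
    intro m hm i x
    have := congrArg (fun f : C(X,ℂ) => f x) (congrFun hm i)
    simp only [Matrix.vecMul, dotProduct] at this
    rw [← this]
    simp
  -- if p(x) = 0 then m i x = 0
  have hzero : ∀ (m : Fin n → C(X,ℂ)), m ᵥ* p = m → ∀ x : X,
      p.map (fun f => f x) = 0 → ∀ i, m i x = 0 := by
    intro m hm x hx i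
    rw [hvec m hm i x]
    apply Finset.sum_eq_zero
    intro j _
    have : (p j i) x = 0 := by
      have := congrFun (congrFun hx j) i
      simpa [Matrix.map_apply] using this
    simp [this]
  -- Part 3
  have part3 : ∀ x : X, (∑ j, p j j) x =
      if (p.map (fun f => f x)).rank = 1 then 1 else 0 := by
    intro x
    rw [htr x]
    rcases hdich x with h | h
    · simp [h]
    · have : (p.map (fun f => f x)).rank = 0 := by rw [h]; exact Matrix.rank_zero
      simp [this]
  -- Part 2
  have part2 : ∀ m : Fin n → C(X, ℂ), m ᵥ* p = m → ∀ i, m i * (∑ j, p j j) = m i := by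
    intro m hm i
    ext x
    simp only [ContinuousMap.mul_apply]
    rcases hdich x with h | h
    · rw [part3 x, if_pos h, mul_one]
    · have h0 := hzero m hm x h i
      have : (p.map (fun f => f x)).rank = 0 := by rw [h]; exact Matrix.rank_zero
      rw [part3 x, h0, zero_mul]
  refine ⟨⟨?_, ?_⟩, part2, part3⟩
  · -- forward: full → rank 1 everywhere
    intro hfull x
    by_contra hx
    have hq0 : p.map (fun f => f x) = 0 := (hdich x).resolve_left hx
    -- evaluation linear map
    let φ : C(X, ℂ) →ₗ[ℂ] ℂ :=
      { toFun := fun f => f x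
        map_add' := fun f g => rfl
        map_smul' := fun c f => rfl }
    have hSker : S ⊆ (LinearMap.ker φ : Set C(X,ℂ)) := by
      rintro a ⟨m, r, hm, hr, rfl⟩
      simp only [SetLike.mem_coe, LinearMap.mem_ker]
      show (∑ i, star (m i) * r i) x = 0
      rw [ContinuousMap.coe_sum, Finset.sum_apply]
      apply Finset.sum_eq_zero
      intro i _
      have := hzero m hm x hq0 i
      simp [this]
    have hspan : (Submodule.span ℂ S : Set C(X,ℂ)) ⊆ (LinearMap.ker φ : Set C(X,ℂ)) :=
      Submodule.span_le.mpr hSker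
    have hclosed : IsClosed (LinearMap.ker φ : Set C(X,ℂ)) := by
      have : (LinearMap.ker φ : Set C(X,ℂ)) = (fun f : C(X,ℂ) => f x) ⁻¹' {0} := by
        ext f; simp [φ, LinearMap.mem_ker]
      rw [this]
      exact isClosed_singleton.preimage (continuous_eval_const x)
    have h1 : (1 : C(X,ℂ)) ∈ closure (Submodule.span ℂ S : Set C(X,ℂ)) := by
      rw [hfull]; trivial
    have := hclosed.closure_subset_iff.mpr hspan h1
    simp only [SetLike.mem_coe, LinearMap.mem_ker] at this
    have h1x : φ (1 : C(X,ℂ)) = 1 := rfl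
    rw [this] at h1x
    exact one_ne_zero h1x.symm
  · -- backward: rank 1 everywhere → full
    intro hr1
    -- the trace is identically 1
    have ht1 : (∑ j, p j j) = (1 : C(X,ℂ)) := by
      ext x
      rw [part3 x, if_pos (hr1 x)]
      rfl
    -- each row gives an element of S
    have hrow : ∀ k : Fin n, (∑ i, star (p k i) * p k i) ∈ S := by
      intro k
      refine ⟨fun i => p k i, fun i => p k i, ?_, ?_, rfl⟩ <;>
      · funext j
        have := congrFun (congrFun hp k) j
        simpa [Matrix.vecMul, dotProduct, Matrix.mul_apply] using this
    -- sum of rows is the trace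
    have hsum : ∑ k, ∑ i, star (p k i) * p k i = ∑ j, p j j := by
      have hstar : ∀ k i, star (p k i) = p i k := fun k i => by
        have := congrFun (congrFun hpsa i) k
        simpa [Matrix.conjTranspose_apply] using this
      calc ∑ k, ∑ i, star (p k i) * p k i = ∑ k, ∑ i, p i k * p k i := by
            simp_rw [hstar]
        _ = ∑ i, ∑ k, p i k * p k i := Finset.sum_comm
        _ = ∑ i, p i i := by
            apply Finset.sum_congr rfl
            intro i _
            have := congrFun (congrFun hp i) i
            simpa [Matrix.mul_apply] using this
    have hone : (1 : C(X,ℂ)) ∈ Submodule.span ℂ S := by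
      rw [← ht1, ← hsum]
      exact Submodule.sum_mem _ fun k _ => Submodule.subset_span (hrow k)
    -- span S is closed under multiplication by arbitrary continuous functions
    have hmulS : ∀ (f : C(X,ℂ)) (a : C(X,ℂ)), a ∈ S → f * a ∈ S := by
      rintro f a ⟨m, r, hm, hrr, rfl⟩
      refine ⟨m, fun i => f * r i, hm, ?_, ?_⟩
      · funext j
        have := congrFun hrr j
        simp only [Matrix.vecMul, dotProduct] at this ⊢
        rw [← this]
        rw [Finset.mul_sum]
        apply Finset.sum_congr rfl
        intro i _
        ring
      · rw [Finset.mul_sum]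
        apply Finset.sum_congr rfl
        intro i _
        ring
    have htop : (Submodule.span ℂ S : Set C(X,ℂ)) = Set.univ := by
      apply Set.eq_univ_of_forall
      intro g
      have : g = g * 1 := (mul_one g).symm
      rw [this]
      -- g * (element of span) ∈ span
      have : ∀ a ∈ Submodule.span ℂ S, g * a ∈ Submodule.span ℂ S := by
        intro a ha
        induction ha using Submodule.span_induction with
        | mem y hy => exact Submodule.subset_span (hmulS g y hy)
        | zero => simpa using Submodule.zero_mem _
        | add y z _ _ hy hz => rw [mul_add]; exact Submodule.add_mem _ hy hz
        | smul c y _ hy => rw [mul_smul_comm]; exact Submodule.smul_mem _ c hy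
      exact this 1 hone
    rw [htop, closure_univ]
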